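/- arXiv:0905.0434 — 2 statements merged into one kernel-verified Lean document; each statement's English description precedes it below -/
import Mathlib

section
/- Let F be a tree with vertex set {1,…,r}. There exists a constant C, depending on F only, such that for every probability space (S,μ), every integrable symmetric non-negative kernel W : S × S → [0,∞), and every bounded measurable function f : S → ℝ, one has |t⁺(F,f,W)| ≤ C · ‖f‖_∞. -/
open MeasureTheory ENNReal SimpleGraph

/-- The marginal `λ_W(x) = ∫ W(x,y) dμ(y)` of a kernel `W`. -/
noncomputable def marginal {S : Type*} [MeasurableSpace S] (μ : Measure S)
    (W : S × S → ℝ) (x : S) : ℝ :=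
  ∫ y, W (x, y) ∂μ

/-- `t⁺(F,f,W) = ∫_{S^r} (∑_k f(x_k)) ⬝ ∏_{ij ∈ E(F)} W(x_i,x_j) ⬝ ∏_k e^{−λ_W(x_k)} dμ^r`. -/
noncomputable def tIsolPlus {S : Type*} [MeasurableSpace S] (μ : Measure S) {r : ℕ}
    (F : SimpleGraph (Fin r)) [DecidableRel F.Adj] (f : S → ℝ)
    (W : S × S → ℝ) : ℝ :=
  ∫ x : Fin r → S,
    (∑ k : Fin r, f (x k)) *
      (∏ i : Fin r, ∏ j ∈ Finset.univ.filter (fun j => i < j ∧ F.Adj i j), W (x i, x j)) *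
      ∏ k : Fin r, Real.exp (-(marginal μ W (x k)))
    ∂(Measure.pi fun _ => μ)

/-- In a tree, two neighbors of `u` that are at distance (to `r0`) at most that of `u`
must coincide (they are both the "parent" of `u`). -/
lemma tree_parent_unique {α : Type*} {F : SimpleGraph α} (hF : F.IsTree) (r0 : α)
    {u v w : α} (huv : F.Adj u v) (huw : F.Adj u w)
    (hv : F.dist v r0 ≤ F.dist u r0) (hw : F.dist w r0 ≤ F.dist u r0) : v = w := by
  classical
  have hconn := hF.isConnected
  -- unique path from u to r0
  obtain ⟨pu, hpuP, hpuL⟩ := hconn.exists_path_of_dist u r0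
  have huniq := hF.existsUnique_path u r0
  have key : ∀ z : α, F.Adj u z → F.dist z r0 ≤ F.dist u r0 →
      ∃ (pz : F.Walk z r0) (h : u ∉ pz.support) (hz : pz.IsPath), True := by
    intro z hz hd
    obtain ⟨pz, hpzP, hpzL⟩ := hconn.exists_path_of_dist z r0
    refine ⟨pz, ?_, hpzP, trivial⟩
    intro hmem
    have hdrop : (pz.dropUntil u hmem).IsPath := hpzP.dropUntil hmem
    have hEq : pz.dropUntil u hmem = pu := huniq.unique hdrop hpuP
    have hlen : (pz.takeUntil u hmem).length + (pz.dropUntil u hmem).length = pz.length := by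
      rw [← SimpleGraph.Walk.length_append, SimpleGraph.Walk.take_spec]
    have h1 : (pz.dropUntil u hmem).length = F.dist u r0 := by rw [hEq, hpuL]
    have h2 : (pz.takeUntil u hmem).length = 0 := by omega
    have := SimpleGraph.Walk.eq_of_length_eq_zero h2
    exact F.irrefl (this ▸ hz)
  obtain ⟨pv, hvmem, hpvP, -⟩ := key v huv hv
  obtain ⟨pw, hwmem, hpwP, -⟩ := key w huw hw
  have h1 : (pv.cons huv).IsPath := hpvP.cons hvmem
  have h2 : (pw.cons huw).IsPath := hpwP.cons hwmem
  have hEq : pv.cons huv = pw.cons huw := huniq.unique h1 h2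
  have := congrArg (fun q => SimpleGraph.Walk.getVert q 1) hEq
  simpa [SimpleGraph.Walk.getVert] using this

/-- From a nonempty set of (ordered) tree edges one can pick an edge `e` and an endpoint `u`
of `e` such that `u` occurs in no other pair of `P`. -/
lemma exists_leaf_pair {r : ℕ} {F : SimpleGraph (Fin r)} (hF : F.IsTree)
    (P : Finset (Fin r × Fin r)) (hP : ∀ p ∈ P, p.1 < p.2 ∧ F.Adj p.1 p.2)
    (hne : P.Nonempty) :
    ∃ e ∈ P, ∃ u : Fin r, (u = e.1 ∨ u = e.2) ∧
      ∀ p ∈ P, (p.1 = u ∨ p.2 = u) → p = e := by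
  classical
  obtain ⟨e₀, he₀⟩ := hne
  set r0 := e₀.1 with hr0
  set V : Finset (Fin r) := P.image Prod.fst ∪ P.image Prod.snd with hV
  have hVne : V.Nonempty := by
    refine ⟨e₀.1, ?_⟩
    simp only [hV, Finset.mem_union, Finset.mem_image]
    exact Or.inl ⟨e₀, he₀, rfl⟩
  obtain ⟨u, huV, hmax⟩ := V.exists_max_image (fun z => F.dist z r0) hVne
  have hmem : ∀ z : Fin r, z ∈ V ↔ ∃ p ∈ P, p.1 = z ∨ p.2 = z := by
    intro z
    simp only [hV, Finset.mem_union, Finset.mem_image]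
    constructor
    · rintro (⟨p, hp, rfl⟩ | ⟨p, hp, rfl⟩)
      exacts [⟨p, hp, Or.inl rfl⟩, ⟨p, hp, Or.inr rfl⟩]
    · rintro ⟨p, hp, (rfl | rfl)⟩
      exacts [Or.inl ⟨p, hp, rfl⟩, Or.inr ⟨p, hp, rfl⟩]
  obtain ⟨e, heP, heu⟩ := (hmem u).1 huV
  -- the "other endpoint" of a pair q relative to u
  have hother : ∀ p ∈ P, (p.1 = u ∨ p.2 = u) → ∃ z, F.Adj u z ∧ F.dist z r0 ≤ F.dist u r0 ∧
      ((p.1 = u ∧ p.2 = z) ∨ (p.2 = u ∧ p.1 = z)) := by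
    intro p hp hpu
    rcases hpu with h1 | h2
    · refine ⟨p.2, ?_, ?_, Or.inl ⟨h1, rfl⟩⟩
      · exact h1 ▸ (hP p hp).2
      · refine hmax _ ?_
        exact (hmem p.2).2 ⟨p, hp, Or.inr rfl⟩
    · refine ⟨p.1, ?_, ?_, Or.inr ⟨h2, rfl⟩⟩
      · exact h2 ▸ ((hP p hp).2).symm
      · refine hmax _ ?_
        exact (hmem p.1).2 ⟨p, hp, Or.inl rfl⟩
  refine ⟨e, heP, u, ?_, ?_⟩
  · tauto
  · intro p hp hpu
    obtain ⟨z, hz, hzd, hzc⟩ := hother p hp hpu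
    obtain ⟨z', hz', hzd', hzc'⟩ := hother e heP (by tauto)
    have hzz : z = z' := tree_parent_unique hF r0 hz hz' hzd hzd'
    subst hzz
    -- now p and e both have endpoints {u, z} with the first < second
    have h1 := (hP p hp).1
    have h2 := (hP e heP).1
    rcases hzc with ⟨ha, hb⟩ | ⟨ha, hb⟩ <;> rcases hzc' with ⟨hc, hd⟩ | ⟨hc, hd⟩
    · exact Prod.ext (ha.trans hc.symm) (hb.trans hd.symm)
    · exfalso; rw [ha, hb] at h1; rw [hd, hc] at h2; exact absurd h2 (asymm h1)
    · exfalso; rw [hb, ha] at h1; rw [hc, hd] at h2; exact absurd h2 (asymm h1)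
    · exact Prod.ext (hb.trans hd.symm) (ha.trans hc.symm)


/-- `ψ a t = t^a e^{-t}` extended by `0` at `∞`. -/
noncomputable def psiAux (a : ℕ) (t : ℝ≥0∞) : ℝ≥0∞ :=
  if t = ∞ then 0 else ENNReal.ofReal (t.toReal ^ a * Real.exp (-t.toReal))

lemma psiAux_le (a : ℕ) (t : ℝ≥0∞) : psiAux a t ≤ ENNReal.ofReal (a.factorial) := by
  unfold psiAux
  split_ifs with h
  · exact bot_le
  · apply ENNReal.ofReal_le_ofReal
    have ht : (0:ℝ) ≤ t.toReal := ENNReal.toReal_nonneg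
    have h1 : t.toReal ^ a / (a.factorial : ℝ) ≤ Real.exp t.toReal :=
      Real.pow_div_factorial_le_exp t.toReal ht a
    have h2 : Real.exp (-t.toReal) = (Real.exp t.toReal)⁻¹ := by
      rw [Real.exp_neg]
    rw [h2]
    have hexp : (0:ℝ) < Real.exp t.toReal := Real.exp_pos _
    have hfac : (0:ℝ) < (a.factorial : ℝ) := by positivity
    rw [div_le_iff₀ hfac] at h1
    calc t.toReal ^ a * (Real.exp t.toReal)⁻¹
        ≤ (Real.exp t.toReal * (a.factorial : ℝ)) * (Real.exp t.toReal)⁻¹ := by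
          apply mul_le_mul_of_nonneg_right h1 (by positivity)
      _ = (a.factorial : ℝ) := by field_simp
      _ ≤ _ := le_refl _

lemma psiAux_ne_top (a : ℕ) (t : ℝ≥0∞) : psiAux a t ≠ ∞ := by
  unfold psiAux; split_ifs <;> simp [ENNReal.mul_eq_top]

lemma mul_psiAux_le (a : ℕ) (t : ℝ≥0∞) : t * psiAux a t ≤ psiAux (a + 1) t := by
  unfold psiAux
  rcases eq_or_ne t ∞ with h | h
  · simp [h]
  · simp only [if_neg h]
    rw [← ENNReal.ofReal_toReal h]
    rw [← ENNReal.ofReal_mul ENNReal.toReal_nonneg]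
    apply ENNReal.ofReal_le_ofReal
    rw [ENNReal.toReal_ofReal ENNReal.toReal_nonneg]
    ring_nf
    exact le_refl _

lemma measurable_psiAux (a : ℕ) : Measurable (psiAux a) := by
  unfold psiAux
  apply Measurable.ite (MeasurableSet.singleton ∞) measurable_const
  apply ENNReal.measurable_ofReal.comp
  exact ((ENNReal.measurable_toReal.pow_const a).mul
    ((Real.continuous_exp.measurable).comp ENNReal.measurable_toReal.neg))


lemma measurePreserving_pair_eval {S : Type} [MeasurableSpace S] (μ : Measure S)
    [IsProbabilityMeasure μ] {r : ℕ} {i j : Fin r} (hij : i ≠ j) :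
    MeasurePreserving (fun x : Fin r → S => (x i, x j))
      (Measure.pi fun _ => μ) (μ.prod μ) := by
  classical
  constructor
  · exact (measurable_pi_apply i).prodMk (measurable_pi_apply j)
  · symm
    apply Measure.prod_eq
    intro s t hs ht
    rw [Measure.map_apply ((measurable_pi_apply i).prodMk (measurable_pi_apply j)) (hs.prod ht)]
    have hpre : (fun x : Fin r → S => (x i, x j)) ⁻¹' (s ×ˢ t) =
        Set.pi Set.univ (Function.update (Function.update (fun _ : Fin r => Set.univ) i s) j t) := by
      ext x
      simp only [Set.mem_preimage, Set.mem_prod, Set.mem_pi, Set.mem_univ, forall_true_left]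
      constructor
      · rintro ⟨h1, h2⟩ k
        rcases eq_or_ne k j with rfl | hkj
        · simp [Function.update_self, h2]
        · rcases eq_or_ne k i with rfl | hki
          · simp [Function.update_of_ne hkj, Function.update_self, h1]
          · simp [Function.update_of_ne hkj, Function.update_of_ne hki]
      · intro h
        constructor
        · have := h i
          simpa [Function.update_of_ne hij, Function.update_self] using this
        · have := h j
          simpa [Function.update_self] using this
    rw [hpre, Measure.pi_pi]
    have : ∀ k : Fin r,
        μ (Function.update (Function.update (fun _ : Fin r => Set.univ) i s) j t k) =
        Function.update (Function.update (fun _ : Fin r => (1:ℝ≥0∞)) i (μ s)) j (μ t) k := by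
      intro k
      rcases eq_or_ne k j with rfl | hkj
      · simp [Function.update_self]
      · rcases eq_or_ne k i with rfl | hki
        · simp [Function.update_of_ne hkj, Function.update_self]
        · simp [Function.update_of_ne hkj, Function.update_of_ne hki]
    rw [Finset.prod_congr rfl (fun k _ => this k)]
    rw [Finset.prod_update_of_mem (Finset.mem_univ j)]
    rw [show Finset.univ \ {j} = Finset.univ.erase j by simp [Finset.erase_eq]]
    rw [Finset.prod_update_of_mem (Finset.mem_erase.2 ⟨hij, Finset.mem_univ i⟩)]
    simp [mul_comm]

open Finset in
lemma key_bound {S : Type} [MeasurableSpace S] (μ : Measure S) [IsProbabilityMeasure μ]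
    {r : ℕ} {F : SimpleGraph (Fin r)} (hF : F.IsTree)
    (g : S × S → ℝ≥0∞) (hg : Measurable g) (hgs : ∀ x y, g (x, y) = g (y, x))
    (hgf : ∀ p, g p ≠ ∞) :
    ∀ (n : ℕ) (P : Finset (Fin r × Fin r)) (s : Finset (Fin r)) (a : Fin r → ℕ),
      P.card = n →
      (∀ p ∈ P, p.1 < p.2 ∧ F.Adj p.1 p.2) →
      (∀ p ∈ P, p.1 ∈ s ∧ p.2 ∈ s) →
      ∀ x : Fin r → S,
      (∫⋯∫⁻_Finset.univ, (fun z => (∏ p ∈ P, g (z p.1, z p.2)) *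
          ∏ k ∈ s, psiAux (a k) (∫⁻ y, g (z k, y) ∂μ)) ∂(fun _ => μ)) x
        ≤ ∏ k ∈ s, ENNReal.ofReal ((a k + n).factorial) := by
  classical
  set Λ : S → ℝ≥0∞ := fun z => ∫⁻ y, g (z, y) ∂μ with hΛdef
  have hΛ : Measurable Λ := hg.lintegral_prod_right'
  have hmeas : ∀ (P : Finset (Fin r × Fin r)) (s : Finset (Fin r)) (a : Fin r → ℕ),
      Measurable (fun z : Fin r → S => (∏ p ∈ P, g (z p.1, z p.2)) *
        ∏ k ∈ s, psiAux (a k) (Λ (z k))) := by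
    intro P s a
    refine Measurable.mul ?_ ?_
    · exact Finset.measurable_prod _ fun p _ =>
        hg.comp ((measurable_pi_apply _).prodMk (measurable_pi_apply _))
    · exact Finset.measurable_prod _ fun k _ =>
        (measurable_psiAux _).comp (hΛ.comp (measurable_pi_apply k))
  intro n
  induction n with
  | zero =>
    intro P s a hcard hP hPs x
    rw [Finset.card_eq_zero] at hcard
    subst hcard
    calc (∫⋯∫⁻_Finset.univ, (fun z => (∏ p ∈ (∅ : Finset (Fin r × Fin r)), g (z p.1, z p.2)) *
          ∏ k ∈ s, psiAux (a k) (Λ (z k))) ∂(fun _ => μ)) x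
        ≤ (∫⋯∫⁻_Finset.univ, (fun _ => ∏ k ∈ s, ENNReal.ofReal ((a k).factorial))
            ∂(fun _ => μ)) x := by
          refine lmarginal_mono (fun z => ?_) x
          simp only [Finset.prod_empty, one_mul]
          exact Finset.prod_le_prod' fun k _ => psiAux_le _ _
      _ = ∏ k ∈ s, ENNReal.ofReal ((a k).factorial) := by
          simp [lmarginal, lintegral_const]
      _ = ∏ k ∈ s, ENNReal.ofReal ((a k + 0).factorial) := by simp
  | succ n ih =>
    intro P s a hcard hP hPs x
    have hne : P.Nonempty := by rw [← Finset.card_pos, hcard]; omega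
    obtain ⟨e, heP, u, hue, hleaf⟩ := exists_leaf_pair hF P hP hne
    have he12 : e.1 ≠ e.2 := ne_of_lt (hP e heP).1
    have hu_s : u ∈ s := by
      rcases hue with h | h
      · exact h ▸ (hPs e heP).1
      · exact h ▸ (hPs e heP).2
    -- the other endpoint v
    obtain ⟨v, hvadj, hvs, huv, hgeq⟩ :
        ∃ v : Fin r, F.Adj u v ∧ v ∈ s ∧ u ≠ v ∧
          ∀ (y : Fin r → S) (t : S),
            g (Function.update y u t e.1, Function.update y u t e.2) = g (y v, t) := by
      rcases hue with h | h
      · refine ⟨e.2, h ▸ (hP e heP).2, (hPs e heP).2, h ▸ he12, fun y t => ?_⟩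
        rw [← h, Function.update_self, Function.update_of_ne (h ▸ he12).symm, hgs]
      · refine ⟨e.1, h ▸ ((hP e heP).2).symm, (hPs e heP).1, h ▸ he12.symm, fun y t => ?_⟩
        rw [← h, Function.update_self, Function.update_of_ne (h ▸ he12)]
    have hv_s' : v ∈ s.erase u := Finset.mem_erase.2 ⟨fun h => huv h.symm, hvs⟩
    set a' : Fin r → ℕ := Function.update a v (a v + 1) with ha'
    set f : (Fin r → S) → ℝ≥0∞ := fun z => (∏ p ∈ P, g (z p.1, z p.2)) *
        ∏ k ∈ s, psiAux (a k) (Λ (z k)) with hfdef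
    set f' : (Fin r → S) → ℝ≥0∞ := fun z => (∏ p ∈ P.erase e, g (z p.1, z p.2)) *
        ∏ k ∈ s.erase u, psiAux (a' k) (Λ (z k)) with hf'def
    have hnotu : ∀ p ∈ P.erase e, p.1 ≠ u ∧ p.2 ≠ u := by
      intro p hp
      obtain ⟨hpe, hpP⟩ := Finset.mem_erase.mp hp
      exact ⟨fun h => hpe (hleaf p hpP (Or.inl h)), fun h => hpe (hleaf p hpP (Or.inr h))⟩
    -- the inner-integral pointwise bound
    have hstep : ∀ y : Fin r → S,
        ∫⁻ t, f (Function.update y u t) ∂μ ≤ ENNReal.ofReal ((a u).factorial) * f' y := by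
      intro y
      have hC1 : (∏ p ∈ P.erase e, g (y p.1, y p.2)) ≠ ∞ :=
        ENNReal.prod_ne_top fun p _ => hgf _
      have hC2 : (∏ k ∈ s.erase u, psiAux (a k) (Λ (y k))) ≠ ∞ :=
        ENNReal.prod_ne_top fun k _ => psiAux_ne_top _ _
      have hrw : ∀ t : S, f (Function.update y u t) =
          ((∏ p ∈ P.erase e, g (y p.1, y p.2)) * ∏ k ∈ s.erase u, psiAux (a k) (Λ (y k))) *
            (g (y v, t) * psiAux (a u) (Λ t)) := by
        intro t
        simp only [hfdef]
        rw [← Finset.mul_prod_erase P _ heP, ← Finset.mul_prod_erase s _ hu_s]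
        have h1 : ∏ p ∈ P.erase e, g (Function.update y u t p.1, Function.update y u t p.2)
            = ∏ p ∈ P.erase e, g (y p.1, y p.2) := by
          refine Finset.prod_congr rfl fun p hp => ?_
          rw [Function.update_of_ne (hnotu p hp).1, Function.update_of_ne (hnotu p hp).2]
        have h2 : ∏ k ∈ s.erase u, psiAux (a k) (Λ (Function.update y u t k))
            = ∏ k ∈ s.erase u, psiAux (a k) (Λ (y k)) := by
          refine Finset.prod_congr rfl fun k hk => ?_
          rw [Function.update_of_ne (Finset.mem_erase.mp hk).1]
        rw [h1, h2, hgeq y t, Function.update_self]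
        ring
      calc ∫⁻ t, f (Function.update y u t) ∂μ
          = ((∏ p ∈ P.erase e, g (y p.1, y p.2)) * ∏ k ∈ s.erase u, psiAux (a k) (Λ (y k))) *
              ∫⁻ t, g (y v, t) * psiAux (a u) (Λ t) ∂μ := by
            simp_rw [hrw]
            exact lintegral_const_mul' _ _ (ENNReal.mul_ne_top hC1 hC2)
        _ ≤ ((∏ p ∈ P.erase e, g (y p.1, y p.2)) * ∏ k ∈ s.erase u, psiAux (a k) (Λ (y k))) *
              ∫⁻ t, g (y v, t) * ENNReal.ofReal ((a u).factorial) ∂μ := by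
            refine mul_le_mul_right (lintegral_mono fun t => ?_) _
            exact mul_le_mul_right (psiAux_le _ _) _
        _ = ENNReal.ofReal ((a u).factorial) *
              ((∏ p ∈ P.erase e, g (y p.1, y p.2)) *
                (Λ (y v) * ∏ k ∈ s.erase u, psiAux (a k) (Λ (y k)))) := by
            rw [lintegral_mul_const' _ _ ENNReal.ofReal_ne_top]
            ring
        _ ≤ ENNReal.ofReal ((a u).factorial) * f' y := by
            refine mul_le_mul_right (mul_le_mul_right ?_ _) _
            rw [← Finset.mul_prod_erase _ _ hv_s', ← Finset.mul_prod_erase _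
              (fun k => psiAux (a' k) (Λ (y k))) hv_s', ← mul_assoc]
            refine mul_le_mul' ?_ ?_
            · rw [ha', Function.update_self]
              exact mul_psiAux_le _ _
            · refine le_of_eq (Finset.prod_congr rfl fun k hk => ?_)
              rw [ha', Function.update_of_ne (Finset.mem_erase.mp hk).1]
    -- f' does not depend on coordinate u
    have hf'indep : ∀ (y : Fin r → S) (t : S), f' (Function.update y u t) = f' y := by
      intro y t
      simp only [hf'def]
      congr 1
      · refine Finset.prod_congr rfl fun p hp => ?_
        rw [Function.update_of_ne (hnotu p hp).1, Function.update_of_ne (hnotu p hp).2]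
      · refine Finset.prod_congr rfl fun k hk => ?_
        rw [Function.update_of_ne (Finset.mem_erase.mp hk).1]
    have hswap : (∫⋯∫⁻_Finset.univ, f' ∂(fun _ => μ)) =
        (∫⋯∫⁻_(Finset.univ.erase u), f' ∂(fun _ => μ)) := by
      rw [lmarginal_erase' _ (hmeas (P.erase e) (s.erase u) a') (Finset.mem_univ u)]
      have h9 : (fun x : Fin r → S => ∫⁻ t, f' (Function.update x u t) ∂μ) = f' := by
        funext y
        simp_rw [hf'indep y]
        simp [lintegral_const]
      exact congrArg (lmarginal (fun _ => μ) (Finset.univ.erase u)) h9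
    calc (∫⋯∫⁻_Finset.univ, f ∂(fun _ => μ)) x
        = (∫⋯∫⁻_(Finset.univ.erase u),
            (fun y => ∫⁻ t, f (Function.update y u t) ∂μ) ∂(fun _ => μ)) x := by
          rw [← lmarginal_erase' _ (hmeas P s a) (Finset.mem_univ u)]
      _ ≤ (∫⋯∫⁻_(Finset.univ.erase u),
            (fun y => ENNReal.ofReal ((a u).factorial) * f' y) ∂(fun _ => μ)) x :=
          lmarginal_mono (fun y => hstep y) x
      _ = ENNReal.ofReal ((a u).factorial) * (∫⋯∫⁻_(Finset.univ.erase u), f' ∂(fun _ => μ)) x := by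
          simp only [lmarginal]
          exact lintegral_const_mul' _ _ ENNReal.ofReal_ne_top
      _ = ENNReal.ofReal ((a u).factorial) * (∫⋯∫⁻_Finset.univ, f' ∂(fun _ => μ)) x := by
          rw [hswap]
      _ ≤ ENNReal.ofReal ((a u).factorial) * ∏ k ∈ s.erase u, ENNReal.ofReal ((a' k + n).factorial) := by
          refine mul_le_mul_right ?_ _
          refine ih (P.erase e) (s.erase u) a' ?_ ?_ ?_ x
          · rw [Finset.card_erase_of_mem heP, hcard]; omega
          · exact fun p hp => hP p (Finset.mem_of_mem_erase hp)
          · intro p hp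
            obtain ⟨h1, h2⟩ := hPs p (Finset.mem_of_mem_erase hp)
            exact ⟨Finset.mem_erase.2 ⟨(hnotu p hp).1, h1⟩, Finset.mem_erase.2 ⟨(hnotu p hp).2, h2⟩⟩
      _ ≤ ∏ k ∈ s, ENNReal.ofReal ((a k + (n + 1)).factorial) := by
          rw [← Finset.mul_prod_erase s _ hu_s]
          refine mul_le_mul' ?_ ?_
          · exact ENNReal.ofReal_le_ofReal (Nat.cast_le.2 (Nat.factorial_le (by omega)))
          · refine Finset.prod_le_prod' fun k hk => ?_
            refine ENNReal.ofReal_le_ofReal (Nat.cast_le.2 (Nat.factorial_le ?_))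
            rcases eq_or_ne k v with rfl | hkv
            · rw [ha', Function.update_self]; omega
            · rw [ha', Function.update_of_ne hkv]; omega

/-- For every tree `F` on `{1,…,r}` there is a constant `C` (depending only
on `F`) such that for every probability space `(S,μ)`, every integrable symmetric
non-negative kernel `W`, and every bounded measurable `f`, one has
`|t⁺(F,f,W)| ≤ C ⬝ ‖f‖_∞`. -/
theorem tIsolPlus_bounded {r : ℕ} (F : SimpleGraph (Fin r)) [DecidableRel F.Adj]
    (hF : F.IsTree) :
    ∃ C : ℝ, ∀ (S : Type) [MeasurableSpace S], ∀ (μ : Measure S),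
      IsProbabilityMeasure μ →
      ∀ W : S × S → ℝ, Integrable W (μ.prod μ) →
        (∀ x y, W (x, y) = W (y, x)) → (∀ p, 0 ≤ W p) →
      ∀ f : S → ℝ, Measurable f → (∃ M : ℝ, ∀ x, |f x| ≤ M) →
      |tIsolPlus μ F f W| ≤ C * (eLpNorm f ⊤ μ).toReal := by
  classical
  set P₀ : Finset (Fin r × Fin r) :=
    Finset.univ.filter (fun p : Fin r × Fin r => p.1 < p.2 ∧ F.Adj p.1 p.2) with hP₀def
  set m : ℕ := P₀.card with hmdef
  refine ⟨(r : ℝ) * ((m.factorial : ℝ)) ^ r, ?_⟩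
  intro S _ μ hprob W hW hWsymm hWnn f hfm hfbd
  obtain ⟨M, hM⟩ := hfbd
  have hSne : Nonempty S := by
    by_contra h
    have h0 : μ Set.univ = 0 := by
      rw [Set.univ_eq_empty_iff.2 (not_nonempty_iff.1 h)]; exact measure_empty
    rw [measure_univ] at h0; exact one_ne_zero h0
  set π : Measure (Fin r → S) := Measure.pi (fun _ : Fin r => μ) with hπdef
  set N : ℝ := (eLpNorm f ⊤ μ).toReal with hNdef
  have hP₀mem : ∀ p : Fin r × Fin r, p ∈ P₀ → p.1 < p.2 ∧ F.Adj p.1 p.2 := by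
    intro p hp
    rw [hP₀def] at hp
    exact (Finset.mem_filter.mp hp).2
  -- measurable symmetric representative of ofReal ∘ W
  have hWm : AEStronglyMeasurable W (μ.prod μ) := hW.1
  set W' : S × S → ℝ := hWm.mk W with hW'def
  have hW'm : StronglyMeasurable W' := hWm.stronglyMeasurable_mk
  have hWae : W =ᵐ[μ.prod μ] W' := hWm.ae_eq_mk
  set g : S × S → ℝ≥0∞ :=
    fun p => min (ENNReal.ofReal (W' p)) (ENNReal.ofReal (W' (p.2, p.1))) with hgdef
  have hgmeas : Measurable g := by
    apply Measurable.min
    · exact ENNReal.measurable_ofReal.comp hW'm.measurable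
    · exact ENNReal.measurable_ofReal.comp (hW'm.measurable.comp measurable_swap)
  have hgsymm : ∀ x y, g (x, y) = g (y, x) := fun x y => min_comm _ _
  have hgfin : ∀ p, g p ≠ ∞ :=
    fun p => ((min_le_left _ _).trans_lt ENNReal.ofReal_lt_top).ne
  have hgae : g =ᵐ[μ.prod μ] fun p => ENNReal.ofReal (W p) := by
    have h2 : ∀ᵐ p ∂(μ.prod μ), W' (p.2, p.1) = W p := by
      have h3 : (fun p : S × S => W (Prod.swap p)) =ᵐ[μ.prod μ]
          (fun p : S × S => W' (Prod.swap p)) :=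
        (Measure.measurePreserving_swap (μ := μ) (ν := μ)).quasiMeasurePreserving.ae_eq_comp hWae
      filter_upwards [h3] with p hp
      have : W (Prod.swap p) = W p := hWsymm p.2 p.1
      rw [show W' (p.2, p.1) = W' (Prod.swap p) from rfl, ← hp, this]
    filter_upwards [hWae, h2] with p hp1 hp2
    rw [hgdef]
    simp only [← hp1, hp2, min_self]
  set Λ : S → ℝ≥0∞ := fun z => ∫⁻ y, g (z, y) ∂μ with hΛdef
  -- marginal identification
  have hM1 : ∀ᵐ z ∂μ, Λ z = ENNReal.ofReal (marginal μ W z) := by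
    have h1 : ∀ᵐ z ∂μ, ∀ᵐ y ∂μ, g (z, y) = ENNReal.ofReal (W (z, y)) :=
      Measure.ae_ae_of_ae_prod hgae
    have h2 : ∀ᵐ z ∂μ, Integrable (fun y => W (z, y)) μ := hW.prod_right_ae
    filter_upwards [h1, h2] with z hz1 hz2
    calc Λ z = ∫⁻ y, ENNReal.ofReal (W (z, y)) ∂μ := lintegral_congr_ae hz1
      _ = ENNReal.ofReal (∫ y, W (z, y) ∂μ) :=
          (ofReal_integral_eq_lintegral_ofReal hz2
            (Filter.Eventually.of_forall fun y => hWnn _)).symm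
      _ = ENNReal.ofReal (marginal μ W z) := rfl
  have hMz : ∀ᵐ z ∂μ, ENNReal.ofReal (Real.exp (-(marginal μ W z))) = psiAux 0 (Λ z) := by
    filter_upwards [hM1] with z hz
    have hnn : 0 ≤ marginal μ W z := integral_nonneg fun y => hWnn _
    rw [hz]
    unfold psiAux
    rw [if_neg ENNReal.ofReal_ne_top, ENNReal.toReal_ofReal hnn]
    simp
  -- a.e. bound for f
  have hfN : ∀ᵐ z ∂μ, |f z| ≤ N := by
    have htop : eLpNorm f ⊤ μ ≠ ∞ := by
      refine ((eLpNorm_le_of_ae_bound (C := M)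
        (Filter.Eventually.of_forall fun z => by simpa using hM z)).trans_lt ?_).ne
      rw [measure_univ]
      simp
    have hle := enorm_ae_le_eLpNormEssSup f μ
    filter_upwards [hle] with z hz
    have : (‖f z‖₊ : ℝ≥0∞) ≤ eLpNorm f ⊤ μ := by rw [eLpNorm_exponent_top]; exact hz
    calc |f z| = ((‖f z‖₊ : ℝ≥0∞)).toReal := by simp [Real.norm_eq_abs]
      _ ≤ N := ENNReal.toReal_mono htop this
  -- quasi measure preserving evaluations
  have hqmp_eval : ∀ k : Fin r,
      Measure.QuasiMeasurePreserving (fun x : Fin r → S => x k) π μ := by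
    intro k
    refine ⟨measurable_pi_apply k, Measure.AbsolutelyContinuous.mk fun s hs h0 => ?_⟩
    rw [Measure.map_apply (measurable_pi_apply k) hs]
    exact Measure.pi_eval_preimage_null _ h0
  -- edge product splitting
  have hsplit : ∀ {β : Type} [CommMonoid β] (A : S × S → β) (x : Fin r → S),
      (∏ i : Fin r, ∏ j ∈ Finset.univ.filter (fun j => i < j ∧ F.Adj i j), A (x i, x j))
        = ∏ p ∈ P₀, A (x p.1, x p.2) := by
    intro β _ A x
    rw [hP₀def, Finset.prod_filter, ← Finset.univ_product_univ, Finset.prod_product]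
    refine Finset.prod_congr rfl fun i _ => ?_
    rw [Finset.prod_filter]
  -- the integrand, with edges as a product over P₀
  set hfun : (Fin r → S) → ℝ := fun x =>
    (∑ k : Fin r, f (x k)) * (∏ p ∈ P₀, W (x p.1, x p.2)) *
      ∏ k : Fin r, Real.exp (-(marginal μ W (x k))) with hhdef
  have hfun_eq : tIsolPlus μ F f W = ∫ x, hfun x ∂π := by
    unfold tIsolPlus
    congr 1
    funext x
    rw [hsplit W x]
  -- a.e. strong measurability of the integrand
  have hmargsm : AEStronglyMeasurable (fun z => marginal μ W z) μ :=
    hWm.integral_prod_right'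
  have hAESM : AEStronglyMeasurable hfun π := by
    refine AEStronglyMeasurable.mul (AEStronglyMeasurable.mul ?_ ?_) ?_
    · exact (Finset.measurable_sum _ fun k _ =>
        hfm.comp (measurable_pi_apply k)).aestronglyMeasurable
    · refine Finset.aestronglyMeasurable_fun_prod _ fun p hp => ?_
      have hne : p.1 ≠ p.2 := ne_of_lt (hP₀mem p hp).1
      exact hWm.comp_quasiMeasurePreserving
        (measurePreserving_pair_eval μ hne).quasiMeasurePreserving
    · refine Finset.aestronglyMeasurable_fun_prod _ fun k _ => ?_
      have h1 : AEStronglyMeasurable (fun z => Real.exp (-(marginal μ W z))) μ :=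
        (Real.continuous_exp.comp continuous_neg).comp_aestronglyMeasurable hmargsm
      exact h1.comp_quasiMeasurePreserving (hqmp_eval k)
  -- transfer the a.e. facts to the product space
  have hae_f : ∀ᵐ x ∂π, ∀ k : Fin r, |f (x k)| ≤ N :=
    ae_all_iff.2 fun k => (hqmp_eval k).tendsto_ae.eventually hfN
  have hae_psi : ∀ᵐ x ∂π, ∀ k : Fin r,
      ENNReal.ofReal (Real.exp (-(marginal μ W (x k)))) = psiAux 0 (Λ (x k)) :=
    ae_all_iff.2 fun k => (hqmp_eval k).tendsto_ae.eventually hMz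
  have hae_g : ∀ᵐ x ∂π, ∀ p : Fin r × Fin r, p ∈ P₀ →
      ENNReal.ofReal (W (x p.1, x p.2)) = g (x p.1, x p.2) := by
    refine ae_all_iff.2 fun p => ?_
    by_cases hp : p ∈ P₀
    · have hne : p.1 ≠ p.2 := ne_of_lt (hP₀mem p hp).1
      have h4 : (fun x : Fin r → S => ENNReal.ofReal (W (x p.1, x p.2))) =ᵐ[π]
          (fun x => g (x p.1, x p.2)) :=
        (measurePreserving_pair_eval μ hne).quasiMeasurePreserving.ae_eq_comp hgae.symm
      filter_upwards [h4] with x hx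
      exact fun _ => hx
    · exact Filter.Eventually.of_forall fun x hpc => absurd hpc hp
  -- the ℝ≥0∞ dominating function
  set G : (Fin r → S) → ℝ≥0∞ := fun x =>
    (∏ p ∈ P₀, g (x p.1, x p.2)) * ∏ k : Fin r, psiAux 0 (Λ (x k)) with hGdef
  have hptwise : ∀ᵐ x ∂π, ENNReal.ofReal ‖hfun x‖ ≤ ENNReal.ofReal ((r : ℝ) * N) * G x := by
    filter_upwards [hae_f, hae_psi, hae_g] with x h1 h2 h3
    have hWnn1 : (0:ℝ) ≤ ∏ p ∈ P₀, W (x p.1, x p.2) :=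
      Finset.prod_nonneg fun p _ => hWnn _
    have hexp1 : (0:ℝ) ≤ ∏ k : Fin r, Real.exp (-(marginal μ W (x k))) :=
      Finset.prod_nonneg fun k _ => (Real.exp_pos _).le
    have habs : ‖hfun x‖ ≤ ((r : ℝ) * N) * ((∏ p ∈ P₀, W (x p.1, x p.2)) *
        ∏ k : Fin r, Real.exp (-(marginal μ W (x k)))) := by
      rw [hhdef]
      simp only [Real.norm_eq_abs]
      rw [abs_mul, abs_mul, abs_of_nonneg hWnn1, abs_of_nonneg hexp1, mul_assoc]
      refine mul_le_mul_of_nonneg_right ?_ (by positivity)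
      calc |∑ k : Fin r, f (x k)| ≤ ∑ k : Fin r, |f (x k)| := Finset.abs_sum_le_sum_abs _ _
        _ ≤ ∑ _k : Fin r, N := Finset.sum_le_sum fun k _ => h1 k
        _ = (r : ℝ) * N := by simp [mul_comm]
    calc ENNReal.ofReal ‖hfun x‖
        ≤ ENNReal.ofReal (((r : ℝ) * N) * ((∏ p ∈ P₀, W (x p.1, x p.2)) *
            ∏ k : Fin r, Real.exp (-(marginal μ W (x k))))) :=
          ENNReal.ofReal_le_ofReal habs
      _ = ENNReal.ofReal ((r : ℝ) * N) *
            (ENNReal.ofReal (∏ p ∈ P₀, W (x p.1, x p.2)) *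
             ENNReal.ofReal (∏ k : Fin r, Real.exp (-(marginal μ W (x k))))) := by
          rw [ENNReal.ofReal_mul (by positivity), ENNReal.ofReal_mul hWnn1]
      _ = ENNReal.ofReal ((r : ℝ) * N) * G x := by
          rw [hGdef]
          congr 1
          rw [ENNReal.ofReal_prod_of_nonneg (fun p _ => hWnn _),
            ENNReal.ofReal_prod_of_nonneg (fun k _ => (Real.exp_pos _).le)]
          congr 1
          · exact Finset.prod_congr rfl fun p hp => h3 p hp
          · exact Finset.prod_congr rfl fun k _ => h2 k
  -- bound the lintegral of G via the key lemma
  have hGbound : ∫⁻ x, G x ∂π ≤ ∏ _k : Fin r, ENNReal.ofReal ((0 + m).factorial) := by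
    obtain ⟨x₀⟩ : Nonempty (Fin r → S) := ⟨fun _ => Classical.arbitrary S⟩
    rw [hπdef, lintegral_eq_lmarginal_univ x₀]
    have hb := key_bound μ hF g hgmeas hgsymm hgfin m P₀ Finset.univ (fun _ => 0) rfl
      (fun p hp => hP₀mem p hp)
      (fun p _ => ⟨Finset.mem_univ _, Finset.mem_univ _⟩) x₀
    exact hb
  -- put everything together
  have hne_top : ENNReal.ofReal ((r : ℝ) * N) *
      (∏ _k : Fin r, ENNReal.ofReal ((0 + m).factorial)) ≠ ∞ :=
    ENNReal.mul_ne_top ENNReal.ofReal_ne_top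
      (ENNReal.prod_ne_top fun _ _ => ENNReal.ofReal_ne_top)
  have hNnn : 0 ≤ N := ENNReal.toReal_nonneg
  have main : |tIsolPlus μ F f W| ≤
      (ENNReal.ofReal ((r : ℝ) * N) *
        ∏ _k : Fin r, ENNReal.ofReal ((0 + m).factorial)).toReal := by
    rw [hfun_eq]
    calc |∫ x, hfun x ∂π| ≤ ∫ x, ‖hfun x‖ ∂π := by
          rw [← Real.norm_eq_abs]; exact norm_integral_le_integral_norm _
      _ = (∫⁻ x, ENNReal.ofReal ‖hfun x‖ ∂π).toReal :=
          integral_eq_lintegral_of_nonneg_ae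
            (Filter.Eventually.of_forall fun x => norm_nonneg _) hAESM.norm
      _ ≤ _ := by
          refine ENNReal.toReal_mono hne_top ?_
          calc ∫⁻ x, ENNReal.ofReal ‖hfun x‖ ∂π
              ≤ ∫⁻ x, ENNReal.ofReal ((r : ℝ) * N) * G x ∂π := lintegral_mono_ae hptwise
            _ = ENNReal.ofReal ((r : ℝ) * N) * ∫⁻ x, G x ∂π :=
                lintegral_const_mul' _ _ ENNReal.ofReal_ne_top
            _ ≤ _ := mul_le_mul_right hGbound _
  refine main.trans (le_of_eq ?_)
  rw [ENNReal.toReal_mul, ENNReal.toReal_ofReal (by positivity)]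
  rw [Finset.prod_const, Finset.card_univ, Fintype.card_fin]
  rw [← ENNReal.ofReal_pow (by positivity), ENNReal.toReal_ofReal (by positivity)]
  rw [zero_add]
  ring
end

section
/- Let κ₁ and κ₂ be integrable symmetric non-negative kernels on [0,1] (with Lebesgue measure μ) and let δ ∈ [0,1]. Then |m_δ(κ₁) − m_δ(κ₂)| ≤ d_□(κ₁,κ₂), where m_δ(κ) = sup over measurable sets A ⊆ [0,1] with μ(A) ≤ δ of ∫_{A×[0,1]} κ(x,y) dμ(x) dμ(y), and d_□ is the cut metric. -/
open MeasureTheory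

/-- Lebesgue measure restricted to `[0,1]`. -/
noncomputable def μ01 : Measure ℝ := volume.restrict (Set.Icc 0 1)

/-- The cut norm of a function `U : ℝ × ℝ → ℝ` with respect to Lebesgue measure on `[0,1]`:
the supremum of `|∫∫ f(x) U(x,y) g(y) dμ dμ|` over measurable `f, g` bounded by `1`. -/
noncomputable def cutNorm (U : ℝ × ℝ → ℝ) : ℝ :=
  sSup { r : ℝ | ∃ f g : ℝ → ℝ, Measurable f ∧ Measurable g ∧
    (∀ x, |f x| ≤ 1) ∧ (∀ x, |g x| ≤ 1) ∧
    r = |∫ x, (∫ y, f x * U (x, y) * g y ∂μ01) ∂μ01| }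

/-- `τ` is a measure-preserving bijection of `[0,1]` (up to null sets). -/
def IsRearrangementMap (τ : ℝ → ℝ) : Prop :=
  MeasurePreserving τ μ01 μ01 ∧
    ∃ N₁ N₂ : Set ℝ, μ01 N₁ = 0 ∧ μ01 N₂ = 0 ∧
      Set.BijOn τ (Set.Icc 0 1 \ N₁) (Set.Icc 0 1 \ N₂)

/-- The cut metric `d_□(κ₁,κ₂) = inf_τ ‖κ₁ − κ₂^τ‖_□`, the infimum over all rearrangements
`κ₂^τ(x,y) = κ₂(τ(x),τ(y))` of `κ₂` by measure-preserving bijections of `[0,1]`. -/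
noncomputable def cutDist (κ₁ κ₂ : ℝ × ℝ → ℝ) : ℝ :=
  sInf { d : ℝ | ∃ τ : ℝ → ℝ, IsRearrangementMap τ ∧
    d = cutNorm (fun p => κ₁ p - κ₂ (τ p.1, τ p.2)) }

/-- `m_δ(κ)`: the supremum of `∫_{A×[0,1]} κ dμ dμ` over measurable `A ⊆ [0,1]` with
`μ(A) ≤ δ`. -/
noncomputable def mRestr (δ : ℝ) (κ : ℝ × ℝ → ℝ) : ℝ :=
  sSup { r : ℝ | ∃ A : Set ℝ, MeasurableSet A ∧ A ⊆ Set.Icc 0 1 ∧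
    μ01 A ≤ ENNReal.ofReal δ ∧
    r = ∫ x in A, (∫ y, κ (x, y) ∂μ01) ∂μ01 }

/-! ### Auxiliary lemmas -/

instance : IsProbabilityMeasure μ01 := ⟨by simp [μ01]⟩

lemma mu01_compl_Icc : μ01 (Set.Icc (0:ℝ) 1)ᶜ = 0 := by
  simp [μ01, Measure.restrict_apply measurableSet_Icc.compl]

lemma integral_comp_mp {τ : ℝ → ℝ} (hτ : MeasurePreserving τ μ01 μ01)
    {G : ℝ → ℝ} (hG : AEStronglyMeasurable G μ01) :
    ∫ x, G (τ x) ∂μ01 = ∫ y, G y ∂μ01 := by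
  have h := integral_map (μ := μ01) hτ.measurable.aemeasurable (f := G)
    (by rwa [hτ.map_eq])
  rw [hτ.map_eq] at h
  exact h.symm

lemma setIntegral_preimage_mp {τ : ℝ → ℝ} (hτ : MeasurePreserving τ μ01 μ01)
    {G : ℝ → ℝ} (hG : AEStronglyMeasurable G μ01) {B : Set ℝ} (hB : MeasurableSet B) :
    ∫ x in τ ⁻¹' B, G (τ x) ∂μ01 = ∫ y in B, G y ∂μ01 := by
  rw [← integral_indicator hB, ← integral_indicator (hτ.measurable hB)]
  have h : ∀ x, (τ ⁻¹' B).indicator (fun x => G (τ x)) x = B.indicator G (τ x) := by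
    intro x
    by_cases h : τ x ∈ B <;> simp [Set.indicator_apply, Set.mem_preimage, h]
  simp_rw [h]
  exact integral_comp_mp hτ (hG.indicator hB)

lemma zero_mem_mRestr_set (δ : ℝ) (κ : ℝ × ℝ → ℝ) :
    (0:ℝ) ∈ { r : ℝ | ∃ A : Set ℝ, MeasurableSet A ∧ A ⊆ Set.Icc 0 1 ∧
      μ01 A ≤ ENNReal.ofReal δ ∧
      r = ∫ x in A, (∫ y, κ (x, y) ∂μ01) ∂μ01 } :=
  ⟨∅, MeasurableSet.empty, Set.empty_subset _, by simp, by simp⟩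

lemma mRestr_set_bddAbove {κ : ℝ × ℝ → ℝ} (hκ : Integrable κ (μ01.prod μ01))
    (hnn : ∀ p, 0 ≤ κ p) (δ : ℝ) :
    BddAbove { r : ℝ | ∃ A : Set ℝ, MeasurableSet A ∧ A ⊆ Set.Icc 0 1 ∧
      μ01 A ≤ ENNReal.ofReal δ ∧
      r = ∫ x in A, (∫ y, κ (x, y) ∂μ01) ∂μ01 } := by
  refine ⟨∫ x, (∫ y, κ (x, y) ∂μ01) ∂μ01, ?_⟩
  rintro r ⟨A, hA, -, -, rfl⟩
  exact setIntegral_le_integral hκ.integral_prod_left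
    (Filter.Eventually.of_forall fun x => integral_nonneg fun y => hnn _)

lemma cutNorm_set_bddAbove {U : ℝ × ℝ → ℝ} (hU : Integrable U (μ01.prod μ01)) :
    BddAbove { r : ℝ | ∃ f g : ℝ → ℝ, Measurable f ∧ Measurable g ∧
      (∀ x, |f x| ≤ 1) ∧ (∀ x, |g x| ≤ 1) ∧
      r = |∫ x, (∫ y, f x * U (x, y) * g y ∂μ01) ∂μ01| } := by
  refine ⟨∫ x, (∫ y, |U (x, y)| ∂μ01) ∂μ01, ?_⟩
  rintro r ⟨f, g, hf, hg, hf1, hg1, rfl⟩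
  have htop : Integrable (fun x => ∫ y, |U (x, y)| ∂μ01) μ01 := by
    simpa [Real.norm_eq_abs] using hU.integral_norm_prod_left
  calc |∫ x, (∫ y, f x * U (x, y) * g y ∂μ01) ∂μ01|
      ≤ ∫ x, |∫ y, f x * U (x, y) * g y ∂μ01| ∂μ01 := by
        simpa [Real.norm_eq_abs] using
          norm_integral_le_integral_norm (μ := μ01)
            (fun x => ∫ y, f x * U (x, y) * g y ∂μ01)
    _ ≤ ∫ x, (∫ y, |U (x, y)| ∂μ01) ∂μ01 := by
        refine integral_mono_of_nonneg
          (Filter.Eventually.of_forall fun x => abs_nonneg _) htop ?_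
        filter_upwards [hU.prod_right_ae] with x hx
        calc |∫ y, f x * U (x, y) * g y ∂μ01|
            ≤ ∫ y, |f x| * |U (x, y)| * |g y| ∂μ01 := by
              simpa [Real.norm_eq_abs, abs_mul] using
                norm_integral_le_integral_norm (μ := μ01)
                  (fun y => f x * U (x, y) * g y)
          _ ≤ ∫ y, |U (x, y)| ∂μ01 := by
              refine integral_mono_of_nonneg
                (Filter.Eventually.of_forall fun y => by positivity) hx.abs ?_
              refine Filter.Eventually.of_forall fun y => ?_
              dsimp only
              calc |f x| * |U (x, y)| * |g y| ≤ 1 * |U (x, y)| * 1 := by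
                    gcongr
                    · exact hf1 x
                    · exact hg1 y
                _ = |U (x, y)| := by ring

lemma cutNorm_sub_symm (κ κ' : ℝ × ℝ → ℝ) :
    cutNorm (fun p => κ p - κ' p) = cutNorm (fun p => κ' p - κ p) := by
  unfold cutNorm
  congr 1
  ext r
  constructor
  all_goals rintro ⟨f, g, hf, hg, hf1, hg1, rfl⟩
  all_goals refine ⟨-f, g, hf.neg, hg, fun x => by simpa using hf1 x, hg1, ?_⟩
  all_goals {
    congr 1
    refine integral_congr_ae (Filter.Eventually.of_forall fun x => ?_)
    refine integral_congr_ae (Filter.Eventually.of_forall fun y => ?_)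
    simp only [Pi.neg_apply]
    ring }

lemma mRestr_le_add_cutNorm {κ κ' : ℝ × ℝ → ℝ} (hκ : Integrable κ (μ01.prod μ01))
    (hκ' : Integrable κ' (μ01.prod μ01)) (hnn : ∀ p, 0 ≤ κ p) (hnn' : ∀ p, 0 ≤ κ' p)
    (δ : ℝ) :
    mRestr δ κ ≤ mRestr δ κ' + cutNorm (fun p => κ p - κ' p) := by
  have hU : Integrable (fun p => κ p - κ' p) (μ01.prod μ01) := hκ.sub hκ'
  refine csSup_le ⟨0, zero_mem_mRestr_set δ κ⟩ ?_
  rintro r ⟨A, hA, hAsub, hAμ, rfl⟩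
  have h1 : (∫ x in A, (∫ y, κ' (x, y) ∂μ01) ∂μ01) ≤ mRestr δ κ' :=
    le_csSup (mRestr_set_bddAbove hκ' hnn' δ) ⟨A, hA, hAsub, hAμ, rfl⟩
  have e2 : ∫ x in A, (∫ y, (κ (x, y) - κ' (x, y)) ∂μ01) ∂μ01
      = (∫ x in A, (∫ y, κ (x, y) ∂μ01) ∂μ01)
        - ∫ x in A, (∫ y, κ' (x, y) ∂μ01) ∂μ01 := by
    rw [← integral_sub hκ.integral_prod_left.integrableOn
      hκ'.integral_prod_left.integrableOn]
    refine integral_congr_ae (ae_restrict_of_ae ?_)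
    filter_upwards [hκ.prod_right_ae, hκ'.prod_right_ae] with x hx hx'
    exact integral_sub hx hx'
  have e1 : ∫ x, (∫ y, A.indicator (1 : ℝ → ℝ) x * (κ (x, y) - κ' (x, y)) * (1:ℝ) ∂μ01) ∂μ01
      = ∫ x in A, (∫ y, (κ (x, y) - κ' (x, y)) ∂μ01) ∂μ01 := by
    rw [← integral_indicator hA]
    refine integral_congr_ae (Filter.Eventually.of_forall fun x => ?_)
    by_cases h : x ∈ A <;> simp [h]
  have key : |(∫ x in A, (∫ y, κ (x, y) ∂μ01) ∂μ01)
      - ∫ x in A, (∫ y, κ' (x, y) ∂μ01) ∂μ01| ≤ cutNorm (fun p => κ p - κ' p) := by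
    refine le_csSup (cutNorm_set_bddAbove hU) ?_
    refine ⟨A.indicator (1 : ℝ → ℝ), fun _ => 1, measurable_one.indicator hA,
      measurable_const, ?_, fun _ => by norm_num, ?_⟩
    · intro x; by_cases h : x ∈ A <;> simp [h]
    · rw [e1, e2]
  have h2 := (abs_le.1 key).2
  linarith

lemma mRestr_comp_eq {κ : ℝ × ℝ → ℝ} (hκ : Integrable κ (μ01.prod μ01))
    (hnn : ∀ p, 0 ≤ κ p) {τ : ℝ → ℝ} (hτ : IsRearrangementMap τ) (δ : ℝ) :
    mRestr δ (fun p => κ (τ p.1, τ p.2)) = mRestr δ κ := by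
  obtain ⟨hmp, N₁, N₂, hN₁, hN₂, hbij⟩ := hτ
  have hκτ : Integrable (fun p => κ (τ p.1, τ p.2)) (μ01.prod μ01) := by
    have h2 : MeasurePreserving (fun p : ℝ × ℝ => (τ p.1, τ p.2))
        (μ01.prod μ01) (μ01.prod μ01) := hmp.prod hmp
    exact (h2.integrable_comp hκ.aestronglyMeasurable).mpr hκ
  have hnnτ : ∀ p : ℝ × ℝ, 0 ≤ κ (τ p.1, τ p.2) := fun p => hnn _
  set G : ℝ → ℝ := fun x => ∫ y, κ (x, y) ∂μ01 with hGdef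
  have hG : AEStronglyMeasurable G μ01 := hκ.integral_prod_left.aestronglyMeasurable
  -- the rearranged marginal agrees a.e. with `G ∘ τ`
  have hHG : ∀ᵐ x ∂μ01, (∫ y, κ (τ x, τ y) ∂μ01) = G (τ x) := by
    refine ae_of_ae_map (p := fun z => (∫ y, κ (z, τ y) ∂μ01) = G z)
      hmp.measurable.aemeasurable ?_
    rw [hmp.map_eq]
    filter_upwards [hκ.aestronglyMeasurable.prodMk_left] with z hz
    exact integral_comp_mp hmp hz
  refine le_antisymm ?_ ?_
  · -- hard direction: uses the (Lusin–Souslin measurable) image of a set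
    refine csSup_le ⟨0, zero_mem_mRestr_set δ (fun p => κ (τ p.1, τ p.2))⟩ ?_
    rintro r ⟨A, hA, hAsub, hAμ, rfl⟩
    set M := toMeasurable μ01 N₁ with hMdef
    have hM : MeasurableSet M := measurableSet_toMeasurable _ _
    have hMμ : μ01 M = 0 := by rw [measure_toMeasurable]; exact hN₁
    set S : Set ℝ := Set.Icc 0 1 \ M with hSdef
    have hS : MeasurableSet S := measurableSet_Icc.diff hM
    have hSsub : S ⊆ Set.Icc 0 1 \ N₁ :=
      fun x hx => ⟨hx.1, fun h => hx.2 (subset_toMeasurable _ _ h)⟩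
    have hinj : Set.InjOn τ S := hbij.injOn.mono hSsub
    have hScompl : μ01 Sᶜ = 0 := by
      have hc : Sᶜ = (Set.Icc (0:ℝ) 1)ᶜ ∪ M := by
        rw [hSdef, Set.diff_eq, Set.compl_inter, compl_compl]
      rw [hc]
      exact measure_union_null mu01_compl_Icc hMμ
    set B : Set ℝ := τ '' (A ∩ S) with hBdef
    have hB : MeasurableSet B :=
      (hA.inter hS).image_of_measurable_injOn hmp.measurable
        (hinj.mono Set.inter_subset_right)
    have hBsub : B ⊆ Set.Icc 0 1 := by
      rintro y ⟨x, hx, rfl⟩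
      exact (hbij.mapsTo (hSsub hx.2)).1
    have hAS : A ∩ S = τ ⁻¹' B ∩ S := by
      apply Set.Subset.antisymm
      · rintro x ⟨hxA, hxS⟩
        exact ⟨Set.mem_image_of_mem τ ⟨hxA, hxS⟩, hxS⟩
      · rintro x ⟨hxB, hxS⟩
        obtain ⟨a, ⟨haA, haS⟩, ha⟩ := hxB
        have : a = x := hinj haS hxS ha
        exact ⟨this ▸ haA, hxS⟩
    have hBμ : μ01 B ≤ ENNReal.ofReal δ := by
      calc μ01 B = μ01 (τ ⁻¹' B) := (hmp.measure_preimage hB.nullMeasurableSet).symm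
        _ ≤ μ01 (τ ⁻¹' B ∩ S ∪ Sᶜ) :=
            measure_mono (fun x hx => by
              by_cases h : x ∈ S
              · exact Or.inl ⟨hx, h⟩
              · exact Or.inr h)
        _ ≤ μ01 (τ ⁻¹' B ∩ S) + μ01 Sᶜ := measure_union_le _ _
        _ = μ01 (A ∩ S) := by rw [hScompl, ← hAS, add_zero]
        _ ≤ μ01 A := measure_mono Set.inter_subset_left
        _ ≤ ENNReal.ofReal δ := hAμ
    have hAae : A =ᵐ[μ01] τ ⁻¹' B := by
      rw [MeasureTheory.ae_eq_set]
      constructor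
      · refine measure_mono_null (fun x hx => ?_) hScompl
        intro hxS
        exact hx.2 (Set.mem_image_of_mem τ ⟨hx.1, hxS⟩)
      · refine measure_mono_null (fun x hx => ?_) hScompl
        intro hxS
        exact hx.2 ((hAS.symm.subset ⟨hx.1, hxS⟩).1)
    have hval : ∫ x in A, (∫ y, κ (τ x, τ y) ∂μ01) ∂μ01
        = ∫ x in B, G x ∂μ01 := by
      rw [setIntegral_congr_set hAae]
      rw [← setIntegral_preimage_mp hmp hG hB]
      exact integral_congr_ae (ae_restrict_of_ae hHG)
    exact le_of_eq_of_le hval (le_csSup (mRestr_set_bddAbove hκ hnn δ)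
      ⟨B, hB, hBsub, hBμ, rfl⟩)
  · -- easy direction: preimage
    refine csSup_le ⟨0, zero_mem_mRestr_set δ κ⟩ ?_
    rintro r ⟨B, hB, hBsub, hBμ, rfl⟩
    set A : Set ℝ := τ ⁻¹' B ∩ Set.Icc 0 1 with hAdef
    have hA : MeasurableSet A := (hmp.measurable hB).inter measurableSet_Icc
    have hAμ : μ01 A ≤ ENNReal.ofReal δ := by
      calc μ01 A ≤ μ01 (τ ⁻¹' B) := measure_mono Set.inter_subset_left
        _ = μ01 B := hmp.measure_preimage hB.nullMeasurableSet
        _ ≤ ENNReal.ofReal δ := hBμ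
    have hAae : A =ᵐ[μ01] τ ⁻¹' B := by
      rw [MeasureTheory.ae_eq_set]
      refine ⟨?_, ?_⟩
      · rw [hAdef, Set.diff_eq_empty.mpr Set.inter_subset_left]
        exact measure_empty
      · refine measure_mono_null (fun x hx => ?_) mu01_compl_Icc
        exact fun hxI => hx.2 ⟨hx.1, hxI⟩
    have hval : ∫ x in A, (∫ y, κ (τ x, τ y) ∂μ01) ∂μ01 = ∫ x in B, G x ∂μ01 := by
      rw [setIntegral_congr_set hAae, ← setIntegral_preimage_mp hmp hG hB]
      exact integral_congr_ae (ae_restrict_of_ae hHG)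
    exact le_csSup (mRestr_set_bddAbove hκτ hnnτ δ)
      ⟨A, hA, Set.inter_subset_right, hAμ, hval.symm⟩

/-- For integrable symmetric non-negative kernels `κ₁, κ₂` on `[0,1]` and
`δ ∈ [0,1]`, we have `|m_δ(κ₁) − m_δ(κ₂)| ≤ d_□(κ₁,κ₂)`. -/
theorem abs_mRestr_sub_le_cutDist (κ₁ κ₂ : ℝ × ℝ → ℝ)
    (h₁int : Integrable κ₁ (μ01.prod μ01)) (h₂int : Integrable κ₂ (μ01.prod μ01))
    (h₁symm : ∀ x y, κ₁ (x, y) = κ₁ (y, x)) (h₂symm : ∀ x y, κ₂ (x, y) = κ₂ (y, x))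
    (h₁nn : ∀ p, 0 ≤ κ₁ p) (h₂nn : ∀ p, 0 ≤ κ₂ p)
    (δ : ℝ) (hδ : δ ∈ Set.Icc (0 : ℝ) 1) :
    |mRestr δ κ₁ - mRestr δ κ₂| ≤ cutDist κ₁ κ₂ := by
  refine le_csInf ⟨cutNorm (fun p => κ₁ p - κ₂ (id p.1, id p.2)), id,
    ⟨MeasurePreserving.id μ01, ∅, ∅, measure_empty, measure_empty,
      by simpa using Set.bijOn_id (Set.Icc (0:ℝ) 1)⟩, rfl⟩ ?_
  rintro d ⟨τ, hτ, rfl⟩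
  have hκτ : Integrable (fun p => κ₂ (τ p.1, τ p.2)) (μ01.prod μ01) := by
    have h2 : MeasurePreserving (fun p : ℝ × ℝ => (τ p.1, τ p.2))
        (μ01.prod μ01) (μ01.prod μ01) := hτ.1.prod hτ.1
    exact (h2.integrable_comp h₂int.aestronglyMeasurable).mpr h₂int
  have hnnτ : ∀ p : ℝ × ℝ, 0 ≤ κ₂ (τ p.1, τ p.2) := fun p => h₂nn _
  rw [← mRestr_comp_eq h₂int h₂nn hτ δ, abs_sub_le_iff]
  constructor
  · have h := mRestr_le_add_cutNorm h₁int hκτ h₁nn hnnτ δ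
    beta_reduce at h
    linarith
  · have h := mRestr_le_add_cutNorm hκτ h₁int hnnτ h₁nn δ
    rw [cutNorm_sub_symm (fun p => κ₂ (τ p.1, τ p.2)) κ₁] at h
    beta_reduce at h
    linarith
end
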